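/- Let A be an n×n real matrix that is Monge (every 2×2 minor tropically nonnegative), and let η₁ ≥ η₂ ≥ ⋯ ≥ η_n be the diagonal entries of A sorted in decreasing order. Then for every k, the coefficient a_k := max over subsets I ⊆ [n] of size k of the tropical permanent of the principal submatrix A_{I,I} equals η₁ + η₂ + ⋯ + η_k, the sum of the k largest diagonal entries. -/
import Mathlib

private lemma perm_mem_aux {n : ℕ} {I : Finset (Fin n)} {σ : Equiv.Perm (Fin n)}
    (hσ : ∀ i ∉ I, σ i = i) {x : Fin n} (hx : x ∈ I) : σ x ∈ I := by
  by_contra h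
  have h2 : σ (σ x) = σ x := hσ _ h
  have h3 : σ x = x := σ.injective h2
  rw [h3] at h
  exact h hx

private lemma fin_le_of_strictMono_aux {k n : ℕ} (φ : Fin k → Fin n) (h : StrictMono φ)
    (i : Fin k) : (i : ℕ) ≤ (φ i : ℕ) := by
  have hsub : (Finset.Iic i).image φ ⊆ Finset.Iic (φ i) := by
    intro y hy
    simp only [Finset.mem_image, Finset.mem_Iic] at hy ⊢
    obtain ⟨z, hz, rfl⟩ := hy
    exact h.monotone hz
  have hcard := Finset.card_le_card hsub
  rw [Finset.card_image_of_injective _ h.injective, Fin.card_Iic, Fin.card_Iic] at hcard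
  omega

private lemma monge_key_aux {n : ℕ} (A : Matrix (Fin n) (Fin n) ℝ)
    (hMonge : ∀ i j k l : Fin n, i < j → k < l → A i l + A j k ≤ A i k + A j l) :
    ∀ m : ℕ, ∀ I : Finset (Fin n), I.card ≤ m → ∀ σ : Equiv.Perm (Fin n),
      (∀ i ∉ I, σ i = i) → ∑ i ∈ I, A i (σ i) ≤ ∑ i ∈ I, A i i := by
  intro m
  induction m with
  | zero =>
    intro I hI σ hσ
    rw [Finset.card_eq_zero.mp (Nat.le_zero.mp hI)]
    simp
  | succ m ih =>
    intro I hI σ hσ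
    rcases Finset.eq_empty_or_nonempty I with rfl | hne
    · simp
    have hMmem : I.max' hne ∈ I := I.max'_mem hne
    set M := I.max' hne with hM
    have step : ∀ τ : Equiv.Perm (Fin n), (∀ i ∉ I, τ i = i) → τ M = M →
        ∑ i ∈ I, A i (τ i) ≤ ∑ i ∈ I, A i i := by
      intro τ hτ hm
      have hE : ∀ i ∉ I.erase M, τ i = i := by
        intro i hi
        by_cases h : i = M
        · rw [h]; exact hm
        · exact hτ i (fun hi' => hi (Finset.mem_erase.mpr ⟨h, hi'⟩))
      have hcard : (I.erase M).card ≤ m := by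
        have h1 := Finset.card_erase_of_mem hMmem
        have h2 := Finset.card_pos.mpr hne
        omega
      have hrec := ih (I.erase M) hcard τ hE
      rw [← Finset.add_sum_erase I (fun i => A i (τ i)) hMmem,
          ← Finset.add_sum_erase I (fun i => A i i) hMmem]
      simp only [hm]
      linarith
    by_cases hfix : σ M = M
    · exact step σ hσ hfix
    · have haI : σ M ∈ I := perm_mem_aux hσ hMmem
      have hjM : σ (σ.symm M) = M := σ.apply_symm_apply M
      have hjI : σ.symm M ∈ I := by
        by_contra h
        have h1 : σ (σ.symm M) = σ.symm M := hσ _ h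
        rw [hjM] at h1
        exact hfix ((congrArg σ h1).trans hjM)
      have hjne : σ.symm M ≠ M := fun h => hfix (by conv_lhs => rw [← h, hjM])
      have hjlt : σ.symm M < M := lt_of_le_of_ne (I.le_max' _ hjI) hjne
      have halt : σ M < M := lt_of_le_of_ne (I.le_max' _ haI) hfix
      set σ' : Equiv.Perm (Fin n) := (Equiv.swap (σ M) M) * σ with hσ'def
      have hσ'M : σ' M = M := by
        simp [hσ'def, Equiv.swap_apply_left]
      have hσ'j : σ' (σ.symm M) = σ M := by
        simp [hσ'def, hjM, Equiv.swap_apply_right]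
      have hσ'fix : ∀ i ∉ I, σ' i = i := by
        intro i hi
        have h1 : σ i = i := hσ i hi
        have h2 : i ≠ σ M := fun h => hi (h ▸ haI)
        have h3 : i ≠ M := fun h => hi (h ▸ hMmem)
        simp [hσ'def, h1, Equiv.swap_apply_of_ne_of_ne h2 h3]
      have hjmem : σ.symm M ∈ I.erase M := Finset.mem_erase.mpr ⟨hjne, hjI⟩
      have hsplit : ∀ f : Fin n → ℝ, ∑ i ∈ I, f i =
          f M + (f (σ.symm M) + ∑ i ∈ (I.erase M).erase (σ.symm M), f i) := by
        intro f
        rw [← Finset.add_sum_erase I f hMmem,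
            ← Finset.add_sum_erase (I.erase M) f hjmem]
      have hcomp : ∑ i ∈ I, A i (σ i) ≤ ∑ i ∈ I, A i (σ' i) := by
        rw [hsplit (fun i => A i (σ i)), hsplit (fun i => A i (σ' i))]
        have heq : ∀ i ∈ (I.erase M).erase (σ.symm M), A i (σ' i) = A i (σ i) := by
          intro i hi
          obtain ⟨hij, hi2⟩ := Finset.mem_erase.mp hi
          obtain ⟨hiM, _⟩ := Finset.mem_erase.mp hi2
          have h1 : σ i ≠ σ M := fun h => hiM (σ.injective h)
          have h2 : σ i ≠ M := fun h => hij (by rw [← h, Equiv.symm_apply_apply])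
          simp [hσ'def, Equiv.swap_apply_of_ne_of_ne h1 h2]
        rw [Finset.sum_congr rfl heq]
        have hM2 := hMonge (σ.symm M) M (σ M) M hjlt halt
        rw [hσ'M, hσ'j, hjM]
        linarith
      exact le_trans hcomp (step σ' hσ'fix hσ'M)

/-- For an n×n real Monge matrix, the coefficient a_k of the tropical characteristic
polynomial (max over principal submatrices of size k of the tropical permanent)
equals the sum of the k largest diagonal entries. -/
theorem monge_char_poly_coefficient (n : ℕ) (A : Matrix (Fin n) (Fin n) ℝ)
    (hMonge : ∀ i j k l : Fin n, i < j → k < l → A i l + A j k ≤ A i k + A j l)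
    (η : Fin n → ℝ) (hη : Antitone η)
    (e : Equiv.Perm (Fin n)) (he : ∀ i, η i = A (e i) (e i))
    (k : ℕ) (hk : k ≤ n) :
    IsGreatest {x : ℝ | ∃ (I : Finset (Fin n)) (σ : Equiv.Perm (Fin n)),
        I.card = k ∧ (∀ i ∉ I, σ i = i) ∧ x = ∑ i ∈ I, A i (σ i)}
      (∑ i : Fin n, if (i : ℕ) < k then η i else 0) := by
  classical
  -- The "initial segment" finset
  set I₀ : Finset (Fin n) := Finset.univ.filter (fun i : Fin n => (i : ℕ) < k) with hI₀
  have hI₀card : I₀.card = k := by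
    rw [hI₀]
    have : Finset.univ.filter (fun i : Fin n => (i : ℕ) < k)
        = (Finset.range k).attachFin (fun m hm =>
            lt_of_lt_of_le (Finset.mem_range.mp hm) hk) := by
      ext x
      simp [Finset.mem_attachFin]
    rw [this, Finset.card_attachFin, Finset.card_range]
  have htarget : (∑ i : Fin n, if (i : ℕ) < k then η i else 0) = ∑ i ∈ I₀, η i := by
    rw [hI₀, Finset.sum_filter]
  constructor
  · -- membership
    refine ⟨I₀.image e, 1, ?_, ?_, ?_⟩
    · rw [Finset.card_image_of_injective _ e.injective, hI₀card]
    · intro i _; rfl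
    · rw [htarget, Finset.sum_image (fun a _ b _ h => e.injective h)]
      simp only [Equiv.Perm.coe_one, id_eq]
      exact Finset.sum_congr rfl (fun i _ => he i)
  · -- upper bound
    rintro x ⟨I, σ, hIcard, hσ, rfl⟩
    have h1 : ∑ i ∈ I, A i (σ i) ≤ ∑ i ∈ I, A i i :=
      monge_key_aux A hMonge I.card I le_rfl σ hσ
    have h2 : ∑ i ∈ I, A i i = ∑ j ∈ I.image e.symm, η j := by
      rw [Finset.sum_image (fun a _ b _ h => e.symm.injective h)]
      refine Finset.sum_congr rfl (fun i _ => ?_)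
      rw [he (e.symm i), Equiv.apply_symm_apply]
    set J : Finset (Fin n) := I.image e.symm with hJdef
    have hJcard : J.card = k := by
      rw [hJdef, Finset.card_image_of_injective _ e.symm.injective, hIcard]
    -- sum over J is at most sum over initial segment
    have h3 : ∑ j ∈ J, η j ≤ ∑ i ∈ I₀, η i := by
      have hφ := J.orderEmbOfFin hJcard
      have hsumJ : ∑ j ∈ J, η j = ∑ i : Fin k, η (J.orderEmbOfFin hJcard i) := by
        rw [← Finset.sum_image (fun a _ b _ h => (J.orderEmbOfFin hJcard).injective h)]
        congr 1
        ext x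
        simp only [Finset.mem_image, Finset.mem_univ, true_and]
        constructor
        · intro hx
          have : x ∈ Set.range (J.orderEmbOfFin hJcard) := by
            rw [Finset.range_orderEmbOfFin]; exact hx
          obtain ⟨i, hi⟩ := this
          exact ⟨i, hi⟩
        · rintro ⟨i, rfl⟩
          exact J.orderEmbOfFin_mem hJcard i
      have hsumI₀ : ∑ i ∈ I₀, η i = ∑ i : Fin k, η (Fin.castLE hk i) := by
        rw [← Finset.sum_image (fun a _ b _ h => Fin.castLE_injective hk h)]
        congr 1
        ext x
        simp only [Finset.mem_image, Finset.mem_univ, true_and, hI₀,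
          Finset.mem_filter]
        constructor
        · rintro hx
          exact ⟨⟨(x : ℕ), hx⟩, by ext; simp⟩
        · rintro ⟨i, rfl⟩
          simp
      rw [hsumJ, hsumI₀]
      refine Finset.sum_le_sum (fun i _ => hη ?_)
      have := fin_le_of_strictMono_aux _ (J.orderEmbOfFin hJcard).strictMono i
      exact Fin.le_def.mpr this
    rw [htarget]
    calc ∑ i ∈ I, A i (σ i) ≤ ∑ i ∈ I, A i i := h1
      _ = ∑ j ∈ J, η j := h2
      _ ≤ ∑ i ∈ I₀, η i := h3
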